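/- Let L₁,…,L_K be independent random variables where L_j has CCDF P(L_j > t) = exp(−a_j t^δ) for t ≥ 0, with a_j > 0 and δ ∈ (0,1). Let t₁,…,t_K > 0 be weights and define the association event E_k = {t_k L_k^{−1} ≥ t_j L_j^{−1} for all j}. Then P(E_k) = a_k / G_k, where G_k = ∑_{j=1}^K a_j (t_j/t_k)^δ. -/

import Mathlib

open MeasureTheory ProbabilityTheory Finset

open Filter Topology
lemma ccdf_Ici {Ω : Type*} [MeasurableSpace Ω] (P : Measure Ω) [IsProbabilityMeasure P]
    (X : Ω → ℝ) (hX : Measurable X) (hXpos : ∀ ω, 0 < X ω)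
    (a δ : ℝ) (hδ : 0 < δ)
    (hccdf : ∀ s : ℝ, 0 ≤ s → P {ω | s < X ω} = ENNReal.ofReal (Real.exp (-a * s ^ δ)))
    (s : ℝ) (hs : 0 ≤ s) :
    P {ω | s ≤ X ω} = ENNReal.ofReal (Real.exp (-a * s ^ δ)) := by
  rcases eq_or_lt_of_le hs with h0 | hs
  · have huniv : {ω | s ≤ X ω} = Set.univ := by
      ext ω; simp only [Set.mem_setOf_eq, Set.mem_univ, iff_true]
      exact le_of_lt (h0 ▸ hXpos ω)
    rw [huniv, measure_univ, ← h0, Real.zero_rpow hδ.ne', mul_zero, Real.exp_zero,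
      ENNReal.ofReal_one]
  · set E : ℕ → Set Ω := fun n => {ω | s - 1 / (n + 1) < X ω} with hE
    have hEmeas : ∀ n, MeasurableSet (E n) := fun n => measurableSet_lt measurable_const hX
    have hanti : Antitone E := by
      intro m n hmn ω hω
      simp only [hE, Set.mem_setOf_eq] at hω ⊢
      have h1 : (1 : ℝ) / (n + 1) ≤ 1 / (m + 1) := by
        apply one_div_le_one_div_of_le (by positivity)
        have : (m:ℝ) ≤ n := Nat.cast_le.mpr hmn; linarith
      linarith
    have hInt : ⋂ n, E n = {ω | s ≤ X ω} := by
      ext ω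
      simp only [Set.mem_iInter, hE, Set.mem_setOf_eq]
      constructor
      · intro h
        by_contra hlt
        push_neg at hlt
        obtain ⟨n, hn⟩ := exists_nat_one_div_lt (by linarith : (0:ℝ) < s - X ω)
        have := h n
        linarith
      · intro h n
        have : (0:ℝ) < 1 / (n + 1) := by positivity
        linarith
    have h1 : Tendsto (fun n => P (E n)) atTop (𝓝 (P (⋂ n, E n))) :=
      tendsto_measure_iInter_atTop (fun n => (hEmeas n).nullMeasurableSet) hanti
        ⟨0, measure_ne_top _ _⟩
    have h2 : Tendsto (fun n => P (E n)) atTop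
        (𝓝 (ENNReal.ofReal (Real.exp (-a * s ^ δ)))) := by
      have hcont : ContinuousAt (fun x : ℝ => ENNReal.ofReal (Real.exp (-a * x ^ δ))) s := by
        apply ENNReal.continuous_ofReal.continuousAt.comp
        apply Real.continuous_exp.continuousAt.comp
        exact (continuousAt_const.mul
          ((Real.continuousAt_rpow_const s δ (Or.inl hs.ne')))).congr (by rfl)
      have hx : Tendsto (fun n : ℕ => s - 1 / (n + 1)) atTop (𝓝 s) := by
        have : Tendsto (fun n : ℕ => 1 / ((n : ℝ) + 1)) atTop (𝓝 0) := tendsto_one_div_add_atTop_nhds_zero_nat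
        simpa using tendsto_const_nhds.sub this
      have h3 : Tendsto (fun n : ℕ => ENNReal.ofReal (Real.exp (-a * (s - 1/(n+1)) ^ δ)))
          atTop (𝓝 (ENNReal.ofReal (Real.exp (-a * s ^ δ)))) := hcont.tendsto.comp hx
      apply h3.congr'
      obtain ⟨N, hN⟩ := exists_nat_one_div_lt hs
      filter_upwards [eventually_ge_atTop N] with n hn
      have h4 : (1:ℝ) / (n + 1) ≤ 1 / (N + 1) := by
        apply one_div_le_one_div_of_le (by positivity)
        have : (N:ℝ) ≤ n := Nat.cast_le.mpr hn; linarith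
      exact (hccdf _ (by linarith)).symm
    rw [← hInt]
    exact tendsto_nhds_unique h1 h2

/-- Weighted path loss association probability: with independent `L_j` having CCDF
`exp(-a_j t^δ)` and weights `t_j`, the probability of associating with tier `k`
(event `t_k L_k⁻¹ ≥ t_j L_j⁻¹` for all `j`) equals `a_k/G_k`, `G_k = ∑_j a_j (t_j/t_k)^δ`. -/
theorem stmt_1 {Ω : Type*} [MeasurableSpace Ω] (P : Measure Ω) [IsProbabilityMeasure P]
    (K : ℕ) (hK : 0 < K) (L : Fin K → Ω → ℝ) (hLmeas : ∀ j, Measurable (L j))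
    (hLpos : ∀ j ω, 0 < L j ω)
    (hindep : iIndepFun L P)
    (a t : Fin K → ℝ) (ha : ∀ j, 0 < a j) (ht : ∀ j, 0 < t j)
    (δ : ℝ) (hδ : δ ∈ Set.Ioo (0 : ℝ) 1)
    (hccdf : ∀ j, ∀ s : ℝ, 0 ≤ s →
      P {ω | s < L j ω} = ENNReal.ofReal (Real.exp (-(a j) * s ^ δ)))
    (k : Fin K) :
    P {ω | ∀ j, t j * (L j ω)⁻¹ ≤ t k * (L k ω)⁻¹} =
      ENNReal.ofReal (a k / ∑ j, a j * (t j / t k) ^ δ) := by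
  classical
  obtain ⟨hδ0, hδ1⟩ := hδ
  set c : Fin K → ℝ := fun j => t j / t k with hc
  have hc0 : ∀ j, 0 < c j := fun j => div_pos (ht j) (ht k)
  have hck : c k = 1 := div_self (ht k).ne'
  set T : Finset (Fin K) := univ.erase k with hT
  set B : ℝ := ∑ j ∈ T, a j * c j ^ δ with hB
  have hB0 : 0 ≤ B := Finset.sum_nonneg fun j _ =>
    mul_nonneg (ha j).le (Real.rpow_nonneg (hc0 j).le _)
  have hsum : ∑ j, a j * c j ^ δ = a k + B := by
    rw [hB, hT, ← Finset.add_sum_erase _ _ (mem_univ k), hck, Real.one_rpow, mul_one]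
  -- event rewrite
  have hA : {ω | ∀ j, t j * (L j ω)⁻¹ ≤ t k * (L k ω)⁻¹}
      = {ω | ∀ j : {x // x ∈ T}, c j.1 * L k ω ≤ L j.1 ω} := by
    have key : ∀ ω j, (t j * (L j ω)⁻¹ ≤ t k * (L k ω)⁻¹) ↔ (c j * L k ω ≤ L j ω) := by
      intro ω j
      rw [show t j * (L j ω)⁻¹ = t j / L j ω from (div_eq_mul_inv _ _).symm,
        show t k * (L k ω)⁻¹ = t k / L k ω from (div_eq_mul_inv _ _).symm,
        div_le_div_iff₀ (hLpos j ω) (hLpos k ω), hc, div_mul_eq_mul_div,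
        div_le_iff₀ (ht k)]
      constructor <;> intro h <;> nlinarith [h]
    ext ω
    simp only [Set.mem_setOf_eq]
    constructor
    · intro h j
      exact (key ω j.1).mp (h j.1)
    · intro h j
      rcases eq_or_ne j k with rfl | hjk
      · exact le_rfl
      · exact (key ω j).mpr (h ⟨j, by simp [hT, hjk]⟩)
  -- independence
  set Z : Ω → ({x // x ∈ T} → ℝ) := fun ω j => L j.1 ω with hZ
  have hZmeas : Measurable Z := measurable_pi_lambda _ fun j => hLmeas j.1
  have hpair : IndepFun (L k) Z P := by
    have h := hindep.indepFun_finset {k} T (by simp [hT]) hLmeas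
    exact h.comp (φ := fun v : ({x // x ∈ ({k} : Finset (Fin K))} → ℝ) =>
      v ⟨k, by simp⟩) (ψ := id) (measurable_pi_apply _) measurable_id
  set μ : Measure ℝ := P.map (L k) with hμ
  set ν : Measure ({x // x ∈ T} → ℝ) := P.map Z with hν
  haveI : IsProbabilityMeasure μ := Measure.isProbabilityMeasure_map (hLmeas k).aemeasurable
  haveI : IsProbabilityMeasure ν := Measure.isProbabilityMeasure_map hZmeas.aemeasurable
  have hmap : P.map (fun ω => (L k ω, Z ω)) = μ.prod ν :=
    (indepFun_iff_map_prod_eq_prod_map_map (hLmeas k).aemeasurable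
      hZmeas.aemeasurable).mp hpair
  set S : Set (ℝ × ({x // x ∈ T} → ℝ)) := {p | ∀ j, c j.1 * p.1 ≤ p.2 j} with hS
  have hSmeas : MeasurableSet S := by
    have : S = ⋂ j, {p : ℝ × ({x // x ∈ T} → ℝ) | c j.1 * p.1 ≤ p.2 j} := by
      ext p; simp [hS, Set.mem_iInter]
    rw [this]
    exact MeasurableSet.iInter fun j => measurableSet_le (measurable_fst.const_mul _)
      ((measurable_pi_apply j).comp measurable_snd)
  have hPA : P {ω | ∀ j, t j * (L j ω)⁻¹ ≤ t k * (L k ω)⁻¹} = (μ.prod ν) S := by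
    rw [hA, ← hmap, Measure.map_apply ((hLmeas k).prodMk hZmeas) hSmeas]
    rfl
  rw [hPA, Measure.prod_apply hSmeas]
  -- μ is supported on (0, ∞)
  have hμIic : μ (Set.Iic 0) = 0 := by
    rw [hμ, Measure.map_apply (hLmeas k) measurableSet_Iic]
    have : L k ⁻¹' Set.Iic 0 = ∅ := by
      ext ω; simp [Set.mem_preimage, not_le.mpr (hLpos k ω)]
    simp [this]
  have hμpos : ∀ᵐ x ∂μ, 0 < x := by
    rw [ae_iff]
    have : {x : ℝ | ¬ 0 < x} = Set.Iic 0 := by ext x; simp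
    rwa [this]
  -- closed ccdf
  have hccdfI : ∀ (j : Fin K) (s : ℝ), 0 ≤ s →
      P {ω | s ≤ L j ω} = ENNReal.ofReal (Real.exp (-(a j) * s ^ δ)) := fun j =>
    ccdf_Ici P (L j) (hLmeas j) (hLpos j) (a j) δ hδ0 (hccdf j)
  -- section computation
  have hsect : ∀ x : ℝ, 0 < x →
      ν (Prod.mk x ⁻¹' S) = ENNReal.ofReal (Real.exp (-B * x ^ δ)) := by
    intro x hx
    have hpre : Z ⁻¹' (Prod.mk x ⁻¹' S) = ⋂ j ∈ T, L j ⁻¹' Set.Ici (c j * x) := by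
      ext ω
      simp only [Set.mem_preimage, Set.mem_iInter, hS, Set.mem_setOf_eq, hZ,
        Set.mem_Ici]
      exact ⟨fun h j hj => h ⟨j, hj⟩, fun h j => h j.1 j.2⟩
    have hsec_meas : MeasurableSet (Prod.mk x ⁻¹' S) :=
      hSmeas.preimage (measurable_prodMk_left)
    rw [hν, Measure.map_apply hZmeas hsec_meas, hpre,
      hindep.meas_biInter (S := T) (fun j _ => ⟨Set.Ici (c j * x), measurableSet_Ici, rfl⟩)]
    have hfac : ∀ j ∈ T, P (L j ⁻¹' Set.Ici (c j * x))
        = ENNReal.ofReal (Real.exp (-(a j * c j ^ δ) * x ^ δ)) := by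
      intro j _
      have h1 : P (L j ⁻¹' Set.Ici (c j * x)) = P {ω | c j * x ≤ L j ω} := rfl
      rw [h1, hccdfI j (c j * x) (mul_nonneg (hc0 j).le hx.le),
        Real.mul_rpow (hc0 j).le hx.le]
      ring_nf
    rw [Finset.prod_congr rfl hfac]
    rw [← ENNReal.ofReal_prod_of_nonneg (fun j _ => (Real.exp_pos _).le),
      ← Real.exp_sum]
    congr 1
    simp only [neg_mul, Finset.sum_neg_distrib]
    rw [hB, Finset.sum_mul]
  have hint : ∫⁻ x, ν (Prod.mk x ⁻¹' S) ∂μ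
      = ∫⁻ x, ENNReal.ofReal (Real.exp (-B * x ^ δ)) ∂μ :=
    lintegral_congr_ae (hμpos.mono fun x hx => hsect x hx)
  rw [hint]
  have hsum' : (∑ j, a j * (t j / t k) ^ δ) = a k + B := hsum
  rw [hsum']
  rcases eq_or_lt_of_le hB0 with hBz | hBpos
  · rw [← hBz]
    simp only [neg_zero, zero_mul, Real.exp_zero, ENNReal.ofReal_one, lintegral_one,
      measure_univ, add_zero, div_self (ha k).ne']
  -- main case: B > 0
  set ρ : ℝ := a k / B with hρdef
  have hρ : 0 < ρ := div_pos (ha k) hBpos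
  have hcontf : Continuous (fun x : ℝ => Real.exp (-B * x ^ δ)) := by
    apply Real.continuous_exp.comp
    apply continuous_const.mul
    rw [continuous_iff_continuousAt]
    exact fun x => Real.continuousAt_rpow_const x δ (Or.inr hδ0.le)
  rw [lintegral_eq_lintegral_meas_lt μ (Eventually.of_forall fun x => (Real.exp_pos _).le)
    hcontf.measurable.aemeasurable]
  have hg1 : ∀ u : ℝ, 1 ≤ u → μ {x | u < Real.exp (-B * x ^ δ)} = 0 := by
    intro u hu
    refine measure_mono_null ?_ hμIic
    intro x hx
    simp only [Set.mem_setOf_eq] at hx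
    rw [Set.mem_Iic]
    by_contra h
    push_neg at h
    have hxp : 0 < x ^ δ := Real.rpow_pos_of_pos h δ
    have hlt : Real.exp (-B * x ^ δ) < 1 := by
      rw [Real.exp_lt_one_iff]
      nlinarith
    linarith
  have hg2 : ∀ u ∈ Set.Ioo (0:ℝ) 1, μ {x | u < Real.exp (-B * x ^ δ)}
      = ENNReal.ofReal (1 - u ^ ρ) := by
    rintro u ⟨hu0, hu1⟩
    have hlogu : 0 < -Real.log u := by linarith [Real.log_neg hu0 hu1]
    set r : ℝ := ((-Real.log u) / B) ^ (1/δ) with hr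
    have hrpos : 0 < r := Real.rpow_pos_of_pos (by positivity) _
    have hrδ : r ^ δ = (-Real.log u) / B := by
      rw [hr, ← Real.rpow_mul (by positivity), one_div_mul_cancel hδ0.ne', Real.rpow_one]
    have hset : {x : ℝ | u < Real.exp (-B * x ^ δ)} ∩ Set.Ioi 0 = Set.Ioo 0 r := by
      ext x
      simp only [Set.mem_inter_iff, Set.mem_setOf_eq, Set.mem_Ioi, Set.mem_Ioo]
      constructor
      · rintro ⟨hux, hx⟩
        refine ⟨hx, ?_⟩
        have h1 : Real.log u < -B * x ^ δ := (Real.log_lt_iff_lt_exp hu0).mpr hux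
        have h2 : x ^ δ < r ^ δ := by
          rw [hrδ, lt_div_iff₀ hBpos]; nlinarith
        exact (Real.rpow_lt_rpow_iff hx.le hrpos.le hδ0).mp h2
      · rintro ⟨hx, hxr⟩
        refine ⟨?_, hx⟩
        have h2 : x ^ δ < r ^ δ := Real.rpow_lt_rpow hx.le hxr hδ0
        rw [hrδ, lt_div_iff₀ hBpos] at h2
        rw [← Real.exp_log hu0]
        apply Real.exp_lt_exp.mpr
        nlinarith
    have hμset : μ {x : ℝ | u < Real.exp (-B * x ^ δ)} = μ (Set.Ioo 0 r) := by
      rw [← hset]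
      exact (measure_inter_conull (by rw [Set.compl_Ioi]; exact hμIic)).symm
    have hIoi : μ (Set.Ioi 0) = 1 := by
      rw [hμ, Measure.map_apply (hLmeas k) measurableSet_Ioi]
      have h0 : L k ⁻¹' Set.Ioi 0 = {ω | (0:ℝ) < L k ω} := rfl
      rw [h0, hccdf k 0 le_rfl, Real.zero_rpow hδ0.ne', mul_zero, Real.exp_zero,
        ENNReal.ofReal_one]
    have hIci : μ (Set.Ici r) = ENNReal.ofReal (Real.exp (-(a k) * r ^ δ)) := by
      rw [hμ, Measure.map_apply (hLmeas k) measurableSet_Ici]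
      exact hccdfI k r hrpos.le
    have hdisj : Disjoint (Set.Ioo (0:ℝ) r) (Set.Ici r) := by
      rw [Set.disjoint_left]
      rintro x ⟨_, h2⟩ h3
      exact absurd h3 (not_le.mpr h2)
    have hadd : μ (Set.Ioo 0 r) + μ (Set.Ici r) = 1 := by
      rw [← measure_union hdisj measurableSet_Ici, Set.Ioo_union_Ici_eq_Ioi hrpos, hIoi]
    have hexp : Real.exp (-(a k) * r ^ δ) = u ^ ρ := by
      rw [hrδ, Real.rpow_def_of_pos hu0, hρdef]
      congr 1
      field_simp
    rw [hμset, ENNReal.eq_sub_of_add_eq (measure_ne_top _ _) hadd, hIci, hexp,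
      ENNReal.ofReal_sub _ (Real.rpow_nonneg hu0.le _), ENNReal.ofReal_one]
  have hIoiSplit : Set.Ioi (0:ℝ) = Set.Ioo 0 1 ∪ Set.Ici 1 :=
    (Set.Ioo_union_Ici_eq_Ioi one_pos).symm
  have hdisj2 : Disjoint (Set.Ioo (0:ℝ) 1) (Set.Ici 1) := by
    rw [Set.disjoint_left]
    rintro x ⟨_, h2⟩ h3
    exact absurd h3 (not_le.mpr h2)
  rw [hIoiSplit, lintegral_union measurableSet_Ici hdisj2]
  have h2nd : ∫⁻ u in Set.Ici (1:ℝ), μ {x | u < Real.exp (-B * x ^ δ)} = 0 := by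
    rw [setLIntegral_congr_fun (g := fun _ => 0) measurableSet_Ici
      (fun u hu => hg1 u hu)]
    simp
  have hnn : 0 ≤ᵐ[volume.restrict (Set.Ioo (0:ℝ) 1)] fun u : ℝ => 1 - u ^ ρ := by
    refine (ae_restrict_iff' measurableSet_Ioo).mpr (ae_of_all _ fun u hu => ?_)
    have h1 : u ^ ρ ≤ 1 := Real.rpow_le_one hu.1.le hu.2.le hρ.le
    simp only [Pi.zero_apply]
    linarith
  have hcontg : Continuous (fun u : ℝ => 1 - u ^ ρ) := by
    apply continuous_const.sub
    rw [continuous_iff_continuousAt]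
    exact fun x => Real.continuousAt_rpow_const x ρ (Or.inr hρ.le)
  have hintg : IntegrableOn (fun u : ℝ => 1 - u ^ ρ) (Set.Ioo 0 1) volume :=
    (hcontg.integrableOn_Icc).mono_set Set.Ioo_subset_Icc_self
  have h1st : ∫⁻ u in Set.Ioo (0:ℝ) 1, μ {x | u < Real.exp (-B * x ^ δ)}
      = ENNReal.ofReal (a k / (a k + B)) := by
    rw [setLIntegral_congr_fun measurableSet_Ioo (fun u hu => hg2 u hu)]
    rw [← ofReal_integral_eq_lintegral_ofReal hintg hnn]
    congr 1
    rw [← integral_Ioc_eq_integral_Ioo, ← intervalIntegral.integral_of_le zero_le_one]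
    rw [intervalIntegral.integral_sub intervalIntegrable_const
      (intervalIntegral.intervalIntegrable_rpow (Or.inl hρ.le))]
    rw [intervalIntegral.integral_const, integral_rpow (Or.inl (by linarith : (-1:ℝ) < ρ))]
    rw [Real.one_rpow, Real.zero_rpow (by positivity : ρ + 1 ≠ 0)]
    have h5 : ρ + 1 = (a k + B) / B := by rw [hρdef, div_add_one hBpos.ne']
    have h6 : a k + B ≠ 0 := (add_pos (ha k) hBpos).ne'
    rw [smul_eq_mul, h5]
    field_simp
    ring
  rw [h1st, h2nd, add_zero]
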